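/- Let N ≥ 1, M > 0, and let x, y ∈ ℝ^N satisfy 0 ≤ x_n ≤ M and 0 ≤ y_n ≤ M for all n. Then the Hausdorff distance (in ℝ² with the Chebyshev distance) between the compact sets K_x and K_y is at most d^N(x, y) = max_n |x_n − y_n|. -/
import Mathlib


noncomputable def box (M : ℝ) (n : ℕ) : Set (ℝ × ℝ) :=
  Set.Icc (4 * M + 10 * M * (n : ℝ)) (4 * M + 10 * M * (n : ℝ) + 2 * M) ×ˢ Set.Icc (-M) M

noncomputable def pp {N : ℕ} (M : ℝ) (z : Fin N → ℝ) (n : Fin N) : ℝ × ℝ :=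
  (10 * M * ((n : ℕ) : ℝ), z n)

noncomputable def pm {N : ℕ} (M : ℝ) (z : Fin N → ℝ) (n : Fin N) : ℝ × ℝ :=
  (10 * M * ((n : ℕ) : ℝ), -(z n))

noncomputable def Kset {N : ℕ} (M : ℝ) (z : Fin N → ℝ) : Set (ℝ × ℝ) :=
  ⋃ n : Fin N, ({pp M z n, pm M z n} ∪ box M n)

theorem pp_mem {N : ℕ} (M : ℝ) (z : Fin N → ℝ) (n : Fin N) : pp M z n ∈ Kset M z :=
  Set.mem_iUnion.mpr ⟨n, Or.inl (Set.mem_insert _ _)⟩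

theorem pm_mem {N : ℕ} (M : ℝ) (z : Fin N → ℝ) (n : Fin N) : pm M z n ∈ Kset M z :=
  Set.mem_iUnion.mpr ⟨n, Or.inl (Set.mem_insert_of_mem _ rfl)⟩

theorem Kset_compact {N : ℕ} (M : ℝ) (z : Fin N → ℝ) : IsCompact (Kset M z) := by
  apply isCompact_iUnion
  intro n
  exact ((Set.toFinite _).isCompact).union (isCompact_Icc.prod isCompact_Icc)

instance {N : ℕ} (M : ℝ) (z : Fin N → ℝ) : CompactSpace ↥(Kset M z) :=
  isCompact_iff_compactSpace.mp (Kset_compact M z)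

theorem Kset_nonempty {N : ℕ} (hN : 0 < N) (M : ℝ) (z : Fin N → ℝ) : (Kset M z).Nonempty :=
  ⟨pp M z ⟨0, hN⟩, pp_mem M z ⟨0, hN⟩⟩

lemma aux_mem {N : ℕ} {M : ℝ} (x y : Fin N → ℝ) :
    ∀ a ∈ Kset M x, ∃ b ∈ Kset M y, dist a b ≤ dist x y := by
  intro a ha
  rw [Kset, Set.mem_iUnion] at ha
  obtain ⟨n, ha⟩ := ha
  rcases ha with h | h
  · rcases h with h | h
    · refine ⟨pp M y n, pp_mem M y n, ?_⟩
      subst h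
      simp only [pp, Prod.dist_eq, dist_self]
      exact le_trans (max_le dist_nonneg (dist_le_pi_dist x y n)) le_rfl
    · refine ⟨pm M y n, pm_mem M y n, ?_⟩
      rw [Set.mem_singleton_iff] at h
      subst h
      simp only [pm, Prod.dist_eq, dist_self, dist_neg_neg]
      exact max_le dist_nonneg (dist_le_pi_dist x y n)
  · exact ⟨a, Set.mem_iUnion.mpr ⟨n, Or.inr h⟩, by simpa using dist_nonneg⟩

/-- The Hausdorff distance between `K_x` and `K_y` in ℝ² (Chebyshev distance) is at
most the Chebyshev distance `d^N(x,y) = dist x y` on `Fin N → ℝ`. -/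
theorem hausdorffDist_Kset_le {N : ℕ} (hN : 0 < N) {M : ℝ} (hM : 0 < M)
    (x y : Fin N → ℝ) (hx : ∀ n, x n ∈ Set.Icc (0 : ℝ) M) (hy : ∀ n, y n ∈ Set.Icc (0 : ℝ) M) :
    Metric.hausdorffDist (Kset M x) (Kset M y) ≤ dist x y := by
  apply Metric.hausdorffDist_le_of_mem_dist dist_nonneg
  · exact fun a ha => aux_mem x y a ha
  · intro a ha
    obtain ⟨b, hb, hd⟩ := aux_mem y x a ha
    exact ⟨b, hb, by rwa [dist_comm x y]⟩
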